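/- Fix p ∈ ℕ, a symmetric positive definite p×p real matrix Σ, and a diagonal p×p real matrix D = diag(s). Then the 2p×2p block matrix G = [[Σ, Σ−D], [Σ−D, Σ]] is positive semidefinite if and only if the Schur complement 2D − D Σ⁻¹ D is positive semidefinite. -/

import Mathlib

open Matrix

/-- For `Σ` symmetric positive definite and `D` diagonal, the knockoff joint
covariance matrix `G = [[Σ, Σ−D], [Σ−D, Σ]]` is positive semidefinite if and only
if the Schur complement `2D − D Σ⁻¹ D` is positive semidefinite. -/
theorem knockoffGram_posSemidef_iff_schur
    {p : ℕ} (Sg D : Matrix (Fin p) (Fin p) ℝ)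
    (hSgSymm : Sg.IsSymm) (hSgPD : Sg.PosDef) (hD : D.IsDiag) :
    (Matrix.fromBlocks Sg (Sg - D) (Sg - D) Sg).PosSemidef ↔
      ((2 : ℝ) • D - D * Sg⁻¹ * D).PosSemidef := by
  haveI : Invertible Sg := invertibleOfIsUnitDet Sg (isUnit_iff_ne_zero.mpr hSgPD.det_pos.ne')
  have hDH : Dᴴ = D := by
    ext i j
    simpa [Matrix.conjTranspose_apply] using congrFun (congrFun hD.isSymm.eq i) j
  have hB : (Sg - D)ᴴ = Sg - D := by
    rw [conjTranspose_sub, hSgPD.1, hDH]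
  have key := Matrix.PosDef.fromBlocks₁₁ (R' := ℝ) (Sg - D) Sg hSgPD
  rw [hB] at key
  rw [key]
  have hinv : Sg⁻¹ * Sg = 1 := inv_mul_of_invertible Sg
  have hinv' : Sg * Sg⁻¹ = 1 := mul_inv_of_invertible Sg
  have hexp : Sg - (Sg - D) * Sg⁻¹ * (Sg - D) = (2 : ℝ) • D - D * Sg⁻¹ * D := by
    have h2 : (2 : ℝ) • D = D + D := by
      rw [two_smul]
    rw [h2]
    simp only [Matrix.sub_mul, Matrix.mul_sub, Matrix.mul_assoc, hinv, hinv',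
      Matrix.one_mul, Matrix.mul_one]
    abel
  rw [hexp]
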